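/- arXiv:2603.10763 — 3 statements merged into one kernel-verified Lean document; each statement's English description precedes it below -/
import Mathlib

section
/- Let l, K ≥ 1, L > 0, η > 0. Let F : ℝ^l → ℝ (on EuclideanSpace ℝ (Fin l)) have a gradient map ∇F satisfying F(w') ≤ F(w) + ⟨∇F(w), w' − w⟩ + (L/2)‖w' − w‖² for all w, w'. Fix w ∈ ℝ^l and set g := ∇F(w). Let g_1,…,g_K ∈ ℝ^l satisfy (1/K)∑_k g_k = g, with every coordinate of each g_k nonzero and ‖g_k − g‖ ≤ ε_k. Let ḡ ∈ ℝ^l have nonnegative coordinates, define u_k ∈ ℝ^l by (u_k)_i := sign((g_k)_i)·ḡ_i and υ_k := ⟨g_k, u_k⟩. On a probability space (Ω, μ), for each k let X_k, Y_k : Ω → ℝ be measurable random variables taking values in {0,1} with E[X_k] = q_k ∈ (0,1] and E[Y_k] = p_k ∈ [0,1], and let Q_k : Ω → ℝ^l be a random vector with E[Q_k] = g_k, E[‖Q_k‖²] < ∞ and E[‖Q_k − g_k‖²] ≤ δ_k²; assume that for each k the random variables X_k, Y_k, Q_k are mutually independent. Define V_k := (X_k/q_k)·(Y_k·Q_k +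 (1 − Y_k)·u_k), ĝ := (1/K)∑_k V_k, and w⁺ := w − η·ĝ, and assume ω ↦ F(w⁺(ω)) is integrable. Then E[F(w⁺)] − F(w) ≤ −(η/2)‖g‖² + (η/2)‖ḡ‖² + (η/K)∑_{k=1}^K (‖g_k‖² + ε_k² − 2υ_k) + (η/(2K))∑_{k=1}^K G_k, where G_k := (−4p_k + p_k² + Lη·p_k/q_k)‖g_k‖² + (−2p_k + p_k² + Lη·(1 − p_k)/q_k)‖ḡ‖² + (6p_k − 2p_k²)·υ_k + Lη·(p_k/q_k)·δ_k². -/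
open MeasureTheory ProbabilityTheory


lemma integral_coord {Ω : Type*} [MeasurableSpace Ω] (μ : Measure Ω) {l : ℕ}
    (W : Ω → EuclideanSpace ℝ (Fin l)) (hW : Integrable W μ) (i : Fin l) :
    (∫ ω, W ω ∂μ) i = ∫ ω, W ω i ∂μ := by
  have := (EuclideanSpace.proj i (𝕜 := ℝ)).integral_comp_comm hW
  simpa using this.symm

lemma indep_smul_integral {Ω : Type*} [MeasurableSpace Ω] (μ : Measure Ω) [IsProbabilityMeasure μ]
    {l : ℕ} (Z : Ω → ℝ) (W : Ω → EuclideanSpace ℝ (Fin l)) (C : ℝ)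
    (hZm : Measurable Z) (hZb : ∀ ω, |Z ω| ≤ C)
    (hW : Integrable W μ) (hind : IndepFun Z W μ) :
    ∫ ω, Z ω • W ω ∂μ = (∫ ω, Z ω ∂μ) • ∫ ω, W ω ∂μ := by
  have hZW : Integrable (fun ω => Z ω • W ω) μ :=
    hW.smul_of_top_right (memLp_top_of_bound hZm.aestronglyMeasurable C
      (Filter.Eventually.of_forall (fun ω => by simpa using hZb ω)))
  ext i
  have h1 : (∫ ω, Z ω • W ω ∂μ) i = ∫ ω, Z ω * W ω i ∂μ := integral_coord μ _ hZW i
  have hWi : IndepFun Z (fun ω => W ω i) μ :=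
    hind.comp measurable_id (EuclideanSpace.proj i (𝕜 := ℝ)).continuous.measurable
  have h2 : ∫ ω, Z ω * W ω i ∂μ = (∫ ω, Z ω ∂μ) * ∫ ω, W ω i ∂μ :=
    hWi.integral_mul_eq_mul_integral hZm.aestronglyMeasurable
      ((EuclideanSpace.proj i (𝕜 := ℝ)).continuous.comp_aestronglyMeasurable hW.aestronglyMeasurable)
  rw [h1, h2, PiLp.smul_apply, smul_eq_mul, integral_coord μ W hW i]

-- bounded measurable integrable
lemma bdd_meas_integrable {Ω : Type*} [MeasurableSpace Ω] (μ : Measure Ω) [IsProbabilityMeasure μ]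
    (Z : Ω → ℝ) (C : ℝ) (hZm : Measurable Z) (hZb : ∀ ω, |Z ω| ≤ C) : Integrable Z μ := by
  refine (integrable_const C).mono' hZm.aestronglyMeasurable ?_
  exact Filter.Eventually.of_forall fun ω => by simpa using hZb ω


lemma perk_bound {l : ℕ} (L η pk qk b e2 d2 Ek : ℝ)
    (g gk uk : EuclideanSpace ℝ (Fin l))
    (hq0 : 0 < qk) (hp0 : 0 ≤ pk) (hp1 : pk ≤ 1) (hL : 0 < L) (hη : 0 < η)
    (hub : ‖uk‖ ^ 2 = b) (hdev : ‖g - gk‖ ^ 2 ≤ e2)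
    (hE : Ek ≤ pk / qk * (‖gk‖ ^ 2 + d2) + (1 - pk) / qk * b) :
    -η * (inner ℝ g (pk • gk + (1 - pk) • uk) : ℝ) + L * η ^ 2 / 2 * Ek ≤
      -(η / 2) * ‖g‖ ^ 2 + η / 2 * b + η * (‖gk‖ ^ 2 + e2 - 2 * (inner ℝ gk uk : ℝ))
        + η / 2 * ((-4 * pk + pk ^ 2 + L * η * pk / qk) * ‖gk‖ ^ 2
            + (-2 * pk + pk ^ 2 + L * η * (1 - pk) / qk) * b
            + (6 * pk - 2 * pk ^ 2) * (inner ℝ gk uk : ℝ)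
            + L * η * (pk / qk) * d2) := by
  set υ : ℝ := inner ℝ gk uk with hυ
  set m : EuclideanSpace ℝ (Fin l) := pk • gk + (1 - pk) • uk with hm
  have hM : ‖m‖ ^ 2 = pk ^ 2 * ‖gk‖ ^ 2 + 2 * pk * (1 - pk) * υ + (1 - pk) ^ 2 * b := by
    rw [hm, norm_add_sq_real, norm_smul, norm_smul, real_inner_smul_left, real_inner_smul_right]
    rw [Real.norm_eq_abs, Real.norm_eq_abs, abs_of_nonneg hp0, abs_of_nonneg (by linarith : (0:ℝ) ≤ 1 - pk)]
    rw [mul_pow, mul_pow, hub]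
    ring
  have hgm : (inner ℝ g m : ℝ) = (‖g‖ ^ 2 + ‖m‖ ^ 2 - ‖g - m‖ ^ 2) / 2 := by
    have := norm_sub_sq_real g m
    linarith
  have hgu : ‖gk - uk‖ ^ 2 = ‖gk‖ ^ 2 + b - 2 * υ := by
    rw [norm_sub_sq_real, hub, hυ]; ring
  have hN : ‖g - m‖ ^ 2 ≤ 2 * e2 + 2 * (1 - pk) ^ 2 * (‖gk‖ ^ 2 + b - 2 * υ) := by
    have hid : g - m = (g - gk) + (1 - pk) • (gk - uk) := by rw [hm]; module
    have h2 : ‖(1 - pk) • (gk - uk)‖ ^ 2 = (1 - pk) ^ 2 * ‖gk - uk‖ ^ 2 := by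
      rw [norm_smul, Real.norm_eq_abs, abs_of_nonneg (by linarith : (0:ℝ) ≤ 1 - pk), mul_pow]
    have h3 : (inner ℝ (g - gk) ((1 - pk) • (gk - uk)) : ℝ) ≤ ‖g - gk‖ * ‖(1 - pk) • (gk - uk)‖ :=
      real_inner_le_norm _ _
    have h4 := norm_add_sq_real (g - gk) ((1 - pk) • (gk - uk))
    have h5 : 2 * ‖g - gk‖ * ‖(1 - pk) • (gk - uk)‖ ≤ ‖g - gk‖ ^ 2 + ‖(1 - pk) • (gk - uk)‖ ^ 2 :=
      two_mul_le_add_sq _ _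
    rw [hid]
    nlinarith [hgu, h2]
  have hMb : 0 ≤ pk / qk := div_nonneg hp0 hq0.le
  have key : -η * (inner ℝ g m : ℝ) + L * η ^ 2 / 2 * Ek ≤
      -η / 2 * ‖g‖ ^ 2 - η / 2 * ‖m‖ ^ 2 + η / 2 * (2 * e2 + 2 * (1 - pk) ^ 2 * (‖gk‖ ^ 2 + b - 2 * υ))
        + L * η ^ 2 / 2 * (pk / qk * (‖gk‖ ^ 2 + d2) + (1 - pk) / qk * b) := by
    rw [hgm]
    have h1 : η / 2 * ‖g - m‖ ^ 2 ≤ η / 2 * (2 * e2 + 2 * (1 - pk) ^ 2 * (‖gk‖ ^ 2 + b - 2 * υ)) := by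
      apply mul_le_mul_of_nonneg_left hN (by positivity)
    have h2 : L * η ^ 2 / 2 * Ek ≤ L * η ^ 2 / 2 * (pk / qk * (‖gk‖ ^ 2 + d2) + (1 - pk) / qk * b) := by
      apply mul_le_mul_of_nonneg_left hE (by positivity)
    linarith
  refine key.trans (le_of_eq ?_)
  rw [hM]
  field_simp
  ring

set_option maxHeartbeats 2000000 in
/-- Theorem 1 of the paper: one-step convergence bound of SP-FL. Each device `k` holds a
local gradient `gloc k` of the `L`-smooth loss `F` at `w` (averaging to `g = ∇F(w)`),
quantized unbiasedly to `Q k` with expected squared error at most `δ k ^ 2`. The sign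
packet is received with probability `q k` (indicator `X k`), the modulus packet with
probability `p k` (indicator `Y k`); on modulus loss the sign-modulated compensatory
vector `u k = s(gloc k) ⊙ gbar` is used. Mutual independence of `X k, Y k, Q k` is
formalized as `X k ⊥ Y k` together with `(X k, Y k) ⊥ Q k`. -/
theorem sp_fl_one_step_bound (l K : ℕ) (hl : 1 ≤ l) (hK : 1 ≤ K)
    (L η : ℝ) (hL : 0 < L) (hη : 0 < η)
    (F : EuclideanSpace ℝ (Fin l) → ℝ)
    (gradF : EuclideanSpace ℝ (Fin l) → EuclideanSpace ℝ (Fin l))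
    (hsmooth : ∀ w w' : EuclideanSpace ℝ (Fin l),
      F w' ≤ F w + (inner ℝ (gradF w) (w' - w) : ℝ) + L / 2 * ‖w' - w‖ ^ 2)
    (w : EuclideanSpace ℝ (Fin l)) (g : EuclideanSpace ℝ (Fin l)) (hg : g = gradF w)
    (gloc : Fin K → EuclideanSpace ℝ (Fin l))
    (hgavg : ((K : ℝ))⁻¹ • ∑ k, gloc k = g)
    (hgnz : ∀ k i, gloc k i ≠ 0)
    (ε : Fin K → ℝ) (hdev : ∀ k, ‖gloc k - g‖ ≤ ε k)
    (gbar : EuclideanSpace ℝ (Fin l)) (hgbar : ∀ i, 0 ≤ gbar i)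
    (u : Fin K → EuclideanSpace ℝ (Fin l))
    (hu : ∀ k i, u k i = Real.sign (gloc k i) * gbar i)
    (υ : Fin K → ℝ) (hυ : ∀ k, υ k = (inner ℝ (gloc k) (u k) : ℝ))
    {Ω : Type*} [MeasurableSpace Ω] (μ : Measure Ω) [IsProbabilityMeasure μ]
    (X Y : Fin K → Ω → ℝ)
    (hXm : ∀ k, Measurable (X k)) (hYm : ∀ k, Measurable (Y k))
    (hX01 : ∀ k ω, X k ω = 0 ∨ X k ω = 1) (hY01 : ∀ k ω, Y k ω = 0 ∨ Y k ω = 1)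
    (q p : Fin K → ℝ)
    (hq : ∀ k, q k ∈ Set.Ioc (0 : ℝ) 1) (hp : ∀ k, p k ∈ Set.Icc (0 : ℝ) 1)
    (hXmean : ∀ k, ∫ ω, X k ω ∂μ = q k) (hYmean : ∀ k, ∫ ω, Y k ω ∂μ = p k)
    (Q : Fin K → Ω → EuclideanSpace ℝ (Fin l))
    (hQint : ∀ k, Integrable (Q k) μ)
    (hQmean : ∀ k, ∫ ω, Q k ω ∂μ = gloc k)
    (hQsq : ∀ k, Integrable (fun ω => ‖Q k ω‖ ^ 2) μ)
    (δ : Fin K → ℝ) (hQerr : ∀ k, ∫ ω, ‖Q k ω - gloc k‖ ^ 2 ∂μ ≤ δ k ^ 2)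
    (hindXY : ∀ k, IndepFun (X k) (Y k) μ)
    (hindXYQ : ∀ k, IndepFun (fun ω => (X k ω, Y k ω)) (Q k) μ)
    (V : Fin K → Ω → EuclideanSpace ℝ (Fin l))
    (hV : ∀ k ω, V k ω = (X k ω / q k) • (Y k ω • Q k ω + (1 - Y k ω) • u k))
    (ghat : Ω → EuclideanSpace ℝ (Fin l))
    (hghat : ∀ ω, ghat ω = ((K : ℝ))⁻¹ • ∑ k, V k ω)
    (wplus : Ω → EuclideanSpace ℝ (Fin l))
    (hwplus : ∀ ω, wplus ω = w - η • ghat ω)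
    (hFint : Integrable (fun ω => F (wplus ω)) μ) :
    (∫ ω, F (wplus ω) ∂μ) - F w ≤
      -(η / 2) * ‖g‖ ^ 2 + (η / 2) * ‖gbar‖ ^ 2
        + η / K * ∑ k, (‖gloc k‖ ^ 2 + ε k ^ 2 - 2 * υ k)
        + η / (2 * K) * ∑ k,
            ((-4 * p k + p k ^ 2 + L * η * p k / q k) * ‖gloc k‖ ^ 2
              + (-2 * p k + p k ^ 2 + L * η * (1 - p k) / q k) * ‖gbar‖ ^ 2
              + (6 * p k - 2 * p k ^ 2) * υ k
              + L * η * (p k / q k) * δ k ^ 2) := by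
    classical
  have hK0 : (0:ℝ) < K := by exact_mod_cast hK
  have hq0 : ∀ k, 0 < q k := fun k => (hq k).1
  have hp0 : ∀ k, 0 ≤ p k := fun k => (hp k).1
  have hp1 : ∀ k, p k ≤ 1 := fun k => (hp k).2
  -- norm of u k equals norm of gbar
  have hub : ∀ k, ‖u k‖ = ‖gbar‖ := by
    intro k
    rw [EuclideanSpace.norm_eq, EuclideanSpace.norm_eq]
    congr 1
    refine Finset.sum_congr rfl fun i _ => ?_
    rw [hu k i]
    rcases lt_trichotomy (gloc k i) 0 with h | h | h
    · rw [Real.sign_of_neg h]; rw [neg_one_mul, norm_neg]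
    · exact absurd h (hgnz k i)
    · rw [Real.sign_of_pos h]; rw [one_mul]
  -- boundedness and integrability of indicators
  have hXb : ∀ k ω, |X k ω| ≤ 1 := fun k ω => by rcases hX01 k ω with h | h <;> simp [h]
  have hYb : ∀ k ω, |Y k ω| ≤ 1 := fun k ω => by rcases hY01 k ω with h | h <;> simp [h]
  have hXint : ∀ k, Integrable (X k) μ := fun k => bdd_meas_integrable μ _ 1 (hXm k) (hXb k)
  have hXYm : ∀ k, Measurable (fun ω => X k ω * Y k ω) := fun k => (hXm k).mul (hYm k)
  have hXYb : ∀ k ω, |X k ω * Y k ω| ≤ 1 := by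
    intro k ω
    rw [abs_mul]
    calc |X k ω| * |Y k ω| ≤ 1 * 1 :=
      mul_le_mul (hXb k ω) (hYb k ω) (abs_nonneg _) zero_le_one
    _ = 1 := one_mul 1
  have hXYint : ∀ k, Integrable (fun ω => X k ω * Y k ω) μ :=
    fun k => bdd_meas_integrable μ _ 1 (hXYm k) (hXYb k)
  have hEXY : ∀ k, ∫ ω, X k ω * Y k ω ∂μ = q k * p k := by
    intro k
    rw [show (∫ ω, X k ω * Y k ω ∂μ) = (∫ ω, X k ω ∂μ) * ∫ ω, Y k ω ∂μ from (hindXY k).integral_mul_eq_mul_integral (hXm k).aestronglyMeasurable (hYm k).aestronglyMeasurable,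
      hXmean k, hYmean k]
  have hindXYQ' : ∀ k, IndepFun (fun ω => X k ω * Y k ω) (Q k) μ :=
    fun k => (hindXYQ k).comp (measurable_fst.mul measurable_snd) measurable_id
  -- V in split form
  have hV' : ∀ k, V k = fun ω => (q k)⁻¹ • ((X k ω * Y k ω) • Q k ω)
      + (X k ω * (1 - Y k ω) / q k) • u k := by
    intro k; funext ω; rw [hV k ω, smul_add, smul_smul, smul_smul, smul_smul]
    rw [show X k ω / q k * Y k ω = (q k)⁻¹ * (X k ω * Y k ω) by ring,
      show X k ω / q k * (1 - Y k ω) = X k ω * (1 - Y k ω) / q k by ring]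
  -- integrability of V
  have hXYQint : ∀ k, Integrable (fun ω => (X k ω * Y k ω) • Q k ω) μ := by
    intro k
    exact (hQint k).smul_of_top_right (memLp_top_of_bound (hXYm k).aestronglyMeasurable 1
      (Filter.Eventually.of_forall fun ω => by rw [Real.norm_eq_abs]; exact hXYb k ω))
  have hXmYm : ∀ k, Measurable (fun ω => X k ω * (1 - Y k ω) / q k) := fun k =>
    ((hXm k).mul ((measurable_const.sub (hYm k)))).div_const _
  have hXmYb : ∀ k ω, |X k ω * (1 - Y k ω) / q k| ≤ (q k)⁻¹ := by
    intro k ω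
    have h1 : |X k ω * (1 - Y k ω)| ≤ 1 := by
      rcases hX01 k ω with h | h <;> rcases hY01 k ω with h' | h' <;> simp [h, h']
    calc |X k ω * (1 - Y k ω) / q k| = |X k ω * (1 - Y k ω)| / q k := by
          rw [abs_div, abs_of_pos (hq0 k)]
    _ ≤ 1 / q k := by gcongr <;> exact (hq0 k).le
    _ = (q k)⁻¹ := one_div _

  have hVint : ∀ k, Integrable (V k) μ := by
    intro k
    rw [hV' k]
    have hint1 : Integrable (fun ω => (q k)⁻¹ • ((X k ω * Y k ω) • Q k ω)) μ := (hXYQint k).fun_smul _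
    have hint2 : Integrable (fun ω => (X k ω * (1 - Y k ω) / q k) • u k) μ :=
      (bdd_meas_integrable μ _ _ (hXmYm k) (hXmYb k)).smul_const (u k)
    exact hint1.add hint2
  -- mean of V
  have hEV : ∀ k, ∫ ω, V k ω ∂μ = (p k) • gloc k + (1 - p k) • u k := by
    intro k
    have hint1 : Integrable (fun ω => (q k)⁻¹ • ((X k ω * Y k ω) • Q k ω)) μ := (hXYQint k).fun_smul _
    have hint2 : Integrable (fun ω => (X k ω * (1 - Y k ω) / q k) • u k) μ :=
      (bdd_meas_integrable μ _ _ (hXmYm k) (hXmYb k)).smul_const (u k)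
    simp only [hV' k]
    rw [integral_add hint1 hint2]
    rw [integral_smul, indep_smul_integral μ _ _ 1 (hXYm k) (hXYb k) (hQint k) (hindXYQ' k),
      hEXY k, hQmean k, integral_smul_const]
    have h1 : ∫ ω, X k ω * (1 - Y k ω) / q k ∂μ = 1 - p k := by
      have : (fun ω => X k ω * (1 - Y k ω) / q k)
          = fun ω => (X k ω - X k ω * Y k ω) * (q k)⁻¹ := by
        funext ω; field_simp
      rw [this, integral_mul_const, integral_sub (hXint k) (hXYint k), hXmean k, hEXY k]
      field_simp [(hq0 k).ne']
    rw [h1]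
    congr 1
    rw [smul_smul]
    congr 1
    field_simp [(hq0 k).ne']
  -- ghat integrable and its mean
  have hghatfun : ghat = fun ω => (K:ℝ)⁻¹ • ∑ k, V k ω := funext hghat
  have hghatint : Integrable ghat μ := by
    rw [hghatfun]
    exact (integrable_finset_sum _ fun k _ => hVint k).fun_smul _
  have hEghat : ∫ ω, ghat ω ∂μ = (K:ℝ)⁻¹ • ∑ k, ((p k) • gloc k + (1 - p k) • u k) := by
    rw [hghatfun, integral_smul, integral_finset_sum _ fun k _ => hVint k]
    congr 1
    exact Finset.sum_congr rfl fun k _ => hEV k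
  -- inner ℝ product with g integrable
  have hinner_int : Integrable (fun ω => (inner ℝ g (ghat ω) : ℝ)) μ :=
    ContinuousLinearMap.integrable_comp (innerSL ℝ g) hghatint
  -- the second-moment functions ψ
  set ψ : Fin K → Ω → ℝ := fun k ω =>
    ((q k)⁻¹) ^ 2 * (X k ω * Y k ω * ‖Q k ω‖ ^ 2 + X k ω * (1 - Y k ω) * ‖gbar‖ ^ 2) with hψdef
  have hVnormsq : ∀ k ω, ‖V k ω‖ ^ 2 = ψ k ω := by
    intro k ω
    simp only [hψdef]
    rw [hV k ω]
    rcases hX01 k ω with h | h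
    · simp [h]
    · rcases hY01 k ω with h' | h'
      · have hv : (X k ω / q k) • (Y k ω • Q k ω + (1 - Y k ω) • u k) = (q k)⁻¹ • u k := by
          rw [h, h']; norm_num
        rw [hv, norm_smul, Real.norm_eq_abs, abs_inv, abs_of_pos (hq0 k), mul_pow, hub k, h, h']
        ring
      · have hv : (X k ω / q k) • (Y k ω • Q k ω + (1 - Y k ω) • u k) = (q k)⁻¹ • Q k ω := by
          rw [h, h']; norm_num
        rw [hv, norm_smul, Real.norm_eq_abs, abs_inv, abs_of_pos (hq0 k), mul_pow, h, h']
        ring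
  -- integrability of ψ
  have hXYQsqint : ∀ k, Integrable (fun ω => X k ω * Y k ω * ‖Q k ω‖ ^ 2) μ := by
    intro k
    exact (hQsq k).bdd_mul (hXYm k).aestronglyMeasurable (Filter.Eventually.of_forall fun ω => by rw [Real.norm_eq_abs]; exact hXYb k ω)
  have hXmY2int : ∀ k, Integrable (fun ω => X k ω * (1 - Y k ω) * ‖gbar‖ ^ 2) μ := by
    intro k
    refine Integrable.mul_const ?_ _
    exact bdd_meas_integrable μ _ 2 ((hXm k).mul (measurable_const.sub (hYm k)))
      (fun ω => by
        rcases hX01 k ω with h | h <;> rcases hY01 k ω with h' | h' <;> simp [h, h'] <;> norm_num)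
  have hψint : ∀ k, Integrable (ψ k) μ := by
    intro k
    rw [hψdef]
    exact ((hXYQsqint k).add (hXmY2int k)).const_mul _
  -- mean of ‖Q‖²
  have hEQsq : ∀ k, ∫ ω, ‖Q k ω‖ ^ 2 ∂μ ≤ ‖gloc k‖ ^ 2 + δ k ^ 2 := by
    intro k
    have hQin_int : Integrable (fun ω => (inner ℝ (gloc k) (Q k ω) : ℝ)) μ :=
      ContinuousLinearMap.integrable_comp (innerSL ℝ (gloc k)) (hQint k)
    have hexp : ∀ ω, ‖Q k ω - gloc k‖ ^ 2
        = ‖Q k ω‖ ^ 2 - 2 * (inner ℝ (gloc k) (Q k ω) : ℝ) + ‖gloc k‖ ^ 2 := by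
      intro ω
      rw [norm_sub_sq_real, real_inner_comm]
    have hIsub : ∫ ω, ‖Q k ω - gloc k‖ ^ 2 ∂μ
        = (∫ ω, ‖Q k ω‖ ^ 2 ∂μ) - 2 * ‖gloc k‖ ^ 2 + ‖gloc k‖ ^ 2 := by
      calc ∫ ω, ‖Q k ω - gloc k‖ ^ 2 ∂μ
          = ∫ ω, (‖Q k ω‖ ^ 2 - 2 * (inner ℝ (gloc k) (Q k ω) : ℝ) + ‖gloc k‖ ^ 2) ∂μ :=
            integral_congr_ae (Filter.Eventually.of_forall hexp)
        _ = (∫ ω, (‖Q k ω‖ ^ 2 - 2 * (inner ℝ (gloc k) (Q k ω) : ℝ)) ∂μ)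
            + ∫ _ω, (‖gloc k‖ ^ 2 : ℝ) ∂μ :=
            integral_add ((hQsq k).sub (hQin_int.const_mul 2)) (integrable_const _)
        _ = ((∫ ω, ‖Q k ω‖ ^ 2 ∂μ) - ∫ ω, 2 * (inner ℝ (gloc k) (Q k ω) : ℝ) ∂μ) + ‖gloc k‖ ^ 2 := by
            rw [integral_sub (hQsq k) (hQin_int.const_mul 2), integral_const]
            simp
        _ = (∫ ω, ‖Q k ω‖ ^ 2 ∂μ) - 2 * ‖gloc k‖ ^ 2 + ‖gloc k‖ ^ 2 := by
            rw [integral_const_mul, integral_inner (hQint k), hQmean k,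
              real_inner_self_eq_norm_sq]
    have := hQerr k
    rw [hIsub] at this
    linarith
  -- per-k bound on ∫ ψ
  have hEψ : ∀ k, ∫ ω, ψ k ω ∂μ ≤ p k / q k * (‖gloc k‖ ^ 2 + δ k ^ 2) + (1 - p k) / q k * ‖gbar‖ ^ 2 := by
    intro k
    have hindQsq : IndepFun (fun ω => X k ω * Y k ω) (fun ω => ‖Q k ω‖ ^ 2) μ :=
      (hindXYQ k).comp (measurable_fst.mul measurable_snd) (measurable_norm.pow_const 2)
    have h1 : ∫ ω, X k ω * Y k ω * ‖Q k ω‖ ^ 2 ∂μ = q k * p k * ∫ ω, ‖Q k ω‖ ^ 2 ∂μ := by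
      rw [show (∫ ω, X k ω * Y k ω * ‖Q k ω‖ ^ 2 ∂μ) = (∫ ω, X k ω * Y k ω ∂μ) * ∫ ω, ‖Q k ω‖ ^ 2 ∂μ from hindQsq.integral_mul_eq_mul_integral (hXYm k).aestronglyMeasurable (hQsq k).aestronglyMeasurable, hEXY k]
    have h2 : ∫ ω, X k ω * (1 - Y k ω) * ‖gbar‖ ^ 2 ∂μ = q k * (1 - p k) * ‖gbar‖ ^ 2 := by
      have : (fun ω => X k ω * (1 - Y k ω) * ‖gbar‖ ^ 2)
          = fun ω => (X k ω - X k ω * Y k ω) * ‖gbar‖ ^ 2 := by funext ω; ring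
      rw [this, integral_mul_const, integral_sub (hXint k) (hXYint k), hXmean k, hEXY k]
      ring
    have hI : ∫ ω, ψ k ω ∂μ = ((q k)⁻¹) ^ 2 * (q k * p k * ∫ ω, ‖Q k ω‖ ^ 2 ∂μ
        + q k * (1 - p k) * ‖gbar‖ ^ 2) := by
      rw [hψdef]
      rw [integral_const_mul, integral_add (hXYQsqint k) (hXmY2int k), h1, h2]
    rw [hI]
    have hq := hq0 k
    have hEQ := hEQsq k
    have heq : ((q k)⁻¹) ^ 2 * (q k * p k * (‖gloc k‖ ^ 2 + δ k ^ 2) + q k * (1 - p k) * ‖gbar‖ ^ 2)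
        = p k / q k * (‖gloc k‖ ^ 2 + δ k ^ 2) + (1 - p k) / q k * ‖gbar‖ ^ 2 := by
      field_simp
    rw [← heq]
    have : q k * p k * ∫ ω, ‖Q k ω‖ ^ 2 ∂μ ≤ q k * p k * (‖gloc k‖ ^ 2 + δ k ^ 2) :=
      mul_le_mul_of_nonneg_left hEQ (mul_nonneg (hq0 k).le (hp0 k))
    nlinarith [sq_nonneg ((q k)⁻¹)]
  -- pointwise smoothness bound
  have hpt : ∀ ω, F (wplus ω) ≤ F w + (-η * (inner ℝ g (ghat ω) : ℝ)
      + L * η ^ 2 / 2 * ((K:ℝ)⁻¹ * ∑ k, ψ k ω)) := by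
    intro ω
    have h1 := hsmooth w (wplus ω)
    have hww : wplus ω - w = -(η • ghat ω) := by rw [hwplus ω]; abel
    rw [hww] at h1
    have h2 : (inner ℝ (gradF w) (-(η • ghat ω)) : ℝ) = -η * (inner ℝ g (ghat ω) : ℝ) := by
      rw [inner_neg_right, real_inner_smul_right, hg]; ring
    have h3 : ‖-(η • ghat ω)‖ ^ 2 = η ^ 2 * ‖ghat ω‖ ^ 2 := by
      rw [norm_neg, norm_smul, Real.norm_eq_abs, abs_of_pos hη, mul_pow]
    have h4 : ‖ghat ω‖ ^ 2 ≤ (K:ℝ)⁻¹ * ∑ k, ψ k ω := by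
      have h5 : ‖ghat ω‖ ^ 2 = ((K:ℝ)⁻¹) ^ 2 * ‖∑ k, V k ω‖ ^ 2 := by
        rw [hghat ω, norm_smul, Real.norm_eq_abs, abs_inv, Nat.abs_cast, mul_pow]
      have h6 : ‖∑ k, V k ω‖ ^ 2 ≤ (∑ k, ‖V k ω‖) ^ 2 := by
        have := norm_sum_le Finset.univ (fun k => V k ω)
        nlinarith [norm_nonneg (∑ k, V k ω), Finset.sum_nonneg (fun k (_ : k ∈ Finset.univ) => norm_nonneg (V k ω))]
      have h7 : (∑ k, ‖V k ω‖) ^ 2 ≤ (K:ℝ) * ∑ k, ‖V k ω‖ ^ 2 := by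
        have := sq_sum_le_card_mul_sum_sq (s := Finset.univ) (f := fun k => ‖V k ω‖)
        simpa using this
      have h8 : ∑ k, ‖V k ω‖ ^ 2 = ∑ k, ψ k ω :=
        Finset.sum_congr rfl fun k _ => hVnormsq k ω
      calc ‖ghat ω‖ ^ 2 = ((K:ℝ)⁻¹) ^ 2 * ‖∑ k, V k ω‖ ^ 2 := h5
      _ ≤ ((K:ℝ)⁻¹) ^ 2 * ((K:ℝ) * ∑ k, ‖V k ω‖ ^ 2) := by
          refine mul_le_mul_of_nonneg_left (h6.trans h7) (by positivity)
      _ = (K:ℝ)⁻¹ * ∑ k, ψ k ω := by rw [h8]; field_simp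
    have h9 : L / 2 * ‖-(η • ghat ω)‖ ^ 2 ≤ L * η ^ 2 / 2 * ((K:ℝ)⁻¹ * ∑ k, ψ k ω) := by
      rw [h3]
      calc L / 2 * (η ^ 2 * ‖ghat ω‖ ^ 2) = L * η ^ 2 / 2 * ‖ghat ω‖ ^ 2 := by ring
      _ ≤ L * η ^ 2 / 2 * ((K:ℝ)⁻¹ * ∑ k, ψ k ω) :=
          mul_le_mul_of_nonneg_left h4 (by positivity)
    rw [h2] at h1
    linarith
  -- integrate the pointwise bound
  have hRHSint : Integrable (fun ω => F w + (-η * (inner ℝ g (ghat ω) : ℝ)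
      + L * η ^ 2 / 2 * ((K:ℝ)⁻¹ * ∑ k, ψ k ω))) μ := by
    refine (integrable_const _).add (Integrable.add ?_ ?_)
    · exact hinner_int.const_mul _
    · exact (((integrable_finset_sum _ fun k _ => hψint k).const_mul _).const_mul _)
  have hImono := integral_mono hFint hRHSint hpt
  have hIRHS : ∫ ω, (F w + (-η * (inner ℝ g (ghat ω) : ℝ)
      + L * η ^ 2 / 2 * ((K:ℝ)⁻¹ * ∑ k, ψ k ω))) ∂μ
      = F w + (-η * (inner ℝ g (∫ ω, ghat ω ∂μ) : ℝ)
        + L * η ^ 2 / 2 * ((K:ℝ)⁻¹ * ∑ k, ∫ ω, ψ k ω ∂μ)) := by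
    have e1 : Integrable (fun ω => -η * (inner ℝ g (ghat ω) : ℝ)) μ := hinner_int.const_mul _
    have e2 : Integrable (fun ω => L * η ^ 2 / 2 * ((K:ℝ)⁻¹ * ∑ k, ψ k ω)) μ :=
      ((integrable_finset_sum _ fun k _ => hψint k).const_mul _).const_mul _
    have e12 : Integrable (fun ω => -η * (inner ℝ g (ghat ω) : ℝ)
        + L * η ^ 2 / 2 * ((K:ℝ)⁻¹ * ∑ k, ψ k ω)) μ := e1.add e2
    calc ∫ ω, (F w + (-η * (inner ℝ g (ghat ω) : ℝ)
        + L * η ^ 2 / 2 * ((K:ℝ)⁻¹ * ∑ k, ψ k ω))) ∂μ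
        = (∫ _ω, F w ∂μ) + ∫ ω, (-η * (inner ℝ g (ghat ω) : ℝ)
            + L * η ^ 2 / 2 * ((K:ℝ)⁻¹ * ∑ k, ψ k ω)) ∂μ :=
          integral_add (integrable_const _) e12
      _ = F w + ((∫ ω, -η * (inner ℝ g (ghat ω) : ℝ) ∂μ)
            + ∫ ω, L * η ^ 2 / 2 * ((K:ℝ)⁻¹ * ∑ k, ψ k ω) ∂μ) := by
          rw [integral_add e1 e2, integral_const]
          simp
      _ = F w + (-η * (inner ℝ g (∫ ω, ghat ω ∂μ) : ℝ)
            + L * η ^ 2 / 2 * ((K:ℝ)⁻¹ * ∑ k, ∫ ω, ψ k ω ∂μ)) := by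
          rw [integral_const_mul, integral_inner hghatint, integral_const_mul, integral_const_mul,
            integral_finset_sum _ fun k _ => hψint k]
  -- the per-k means
  have hinnerEg : (inner ℝ g (∫ ω, ghat ω ∂μ) : ℝ)
      = (K:ℝ)⁻¹ * ∑ k, (inner ℝ g ((p k) • gloc k + (1 - p k) • u k) : ℝ) := by
    rw [hEghat, real_inner_smul_right, inner_sum]
  -- combine
  rw [hIRHS] at hImono
  have hmain : -η * (inner ℝ g (∫ ω, ghat ω ∂μ) : ℝ)
      + L * η ^ 2 / 2 * ((K:ℝ)⁻¹ * ∑ k, ∫ ω, ψ k ω ∂μ)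
      ≤ (K:ℝ)⁻¹ * ∑ k, (-(η / 2) * ‖g‖ ^ 2 + η / 2 * ‖gbar‖ ^ 2
          + η * (‖gloc k‖ ^ 2 + ε k ^ 2 - 2 * υ k)
          + η / 2 * ((-4 * p k + p k ^ 2 + L * η * p k / q k) * ‖gloc k‖ ^ 2
              + (-2 * p k + p k ^ 2 + L * η * (1 - p k) / q k) * ‖gbar‖ ^ 2
              + (6 * p k - 2 * p k ^ 2) * υ k
              + L * η * (p k / q k) * δ k ^ 2)) := by
    rw [hinnerEg]
    have hsum : -η * ((K:ℝ)⁻¹ * ∑ k, (inner ℝ g ((p k) • gloc k + (1 - p k) • u k) : ℝ))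
        + L * η ^ 2 / 2 * ((K:ℝ)⁻¹ * ∑ k, ∫ ω, ψ k ω ∂μ)
        = (K:ℝ)⁻¹ * ∑ k, (-η * (inner ℝ g ((p k) • gloc k + (1 - p k) • u k) : ℝ)
            + L * η ^ 2 / 2 * ∫ ω, ψ k ω ∂μ) := by
      rw [Finset.sum_add_distrib, ← Finset.mul_sum, ← Finset.mul_sum]
      ring
    rw [hsum]
    refine mul_le_mul_of_nonneg_left (Finset.sum_le_sum fun k _ => ?_) (by positivity)
    have hdevsq : ‖g - gloc k‖ ^ 2 ≤ ε k ^ 2 := by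
      rw [← norm_sub_rev]
      have h := hdev k
      have h0 : (0:ℝ) ≤ ‖gloc k - g‖ := norm_nonneg _
      nlinarith
    have := perk_bound L η (p k) (q k) (‖gbar‖ ^ 2) (ε k ^ 2) (δ k ^ 2) (∫ ω, ψ k ω ∂μ)
      g (gloc k) (u k) (hq0 k) (hp0 k) (hp1 k) hL hη (by rw [hub k]) hdevsq (hEψ k)
    rw [hυ k]
    convert this using 2
  -- final assembly
  have hKne : (K:ℝ) ≠ 0 := ne_of_gt hK0
  have hterm : ∀ i : Fin K, (K:ℝ)⁻¹ * (-(η / 2) * ‖g‖ ^ 2 + η / 2 * ‖gbar‖ ^ 2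
      + η * (‖gloc i‖ ^ 2 + ε i ^ 2 - 2 * υ i)
      + η / 2 * ((-4 * p i + p i ^ 2 + L * η * p i / q i) * ‖gloc i‖ ^ 2
          + (-2 * p i + p i ^ 2 + L * η * (1 - p i) / q i) * ‖gbar‖ ^ 2
          + (6 * p i - 2 * p i ^ 2) * υ i
          + L * η * (p i / q i) * δ i ^ 2))
      = (-(η / 2) * ‖g‖ ^ 2 + (η / 2) * ‖gbar‖ ^ 2) * (K:ℝ)⁻¹
        + η / K * (‖gloc i‖ ^ 2 + ε i ^ 2 - 2 * υ i)
        + η / (2 * K) * ((-4 * p i + p i ^ 2 + L * η * p i / q i) * ‖gloc i‖ ^ 2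
            + (-2 * p i + p i ^ 2 + L * η * (1 - p i) / q i) * ‖gbar‖ ^ 2
            + (6 * p i - 2 * p i ^ 2) * υ i
            + L * η * (p i / q i) * δ i ^ 2) := by
    intro i
    field_simp
  have hRHSeq : (K:ℝ)⁻¹ * ∑ k, (-(η / 2) * ‖g‖ ^ 2 + η / 2 * ‖gbar‖ ^ 2
          + η * (‖gloc k‖ ^ 2 + ε k ^ 2 - 2 * υ k)
          + η / 2 * ((-4 * p k + p k ^ 2 + L * η * p k / q k) * ‖gloc k‖ ^ 2
              + (-2 * p k + p k ^ 2 + L * η * (1 - p k) / q k) * ‖gbar‖ ^ 2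
              + (6 * p k - 2 * p k ^ 2) * υ k
              + L * η * (p k / q k) * δ k ^ 2))
      = -(η / 2) * ‖g‖ ^ 2 + (η / 2) * ‖gbar‖ ^ 2
        + η / K * ∑ k, (‖gloc k‖ ^ 2 + ε k ^ 2 - 2 * υ k)
        + η / (2 * K) * ∑ k,
            ((-4 * p k + p k ^ 2 + L * η * p k / q k) * ‖gloc k‖ ^ 2
              + (-2 * p k + p k ^ 2 + L * η * (1 - p k) / q k) * ‖gbar‖ ^ 2
              + (6 * p k - 2 * p k ^ 2) * υ k
              + L * η * (p k / q k) * δ k ^ 2) := by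
    rw [Finset.mul_sum]
    rw [Finset.sum_congr rfl fun i _ => hterm i]
    rw [Finset.sum_add_distrib, Finset.sum_add_distrib, Finset.sum_const, Finset.card_univ,
      Fintype.card_fin, nsmul_eq_mul, ← Finset.mul_sum, ← Finset.mul_sum]
    field_simp
    congr 1; exact Finset.sum_congr rfl fun x _ => by ring
  rw [← hRHSeq]
  linarith
end

section
/- Let H_s < 0, H_v < 0, and A, B, C, D be real numbers with D > 0 and C + D ≥ 0. Define G' : (0,1) → ℝ by G'(α) = A·exp(H_v/(1−α))·H_v/(1−α)² + B·exp(2H_v/(1−α))·2H_v/(1−α)² + C·exp(H_v/(1−α) − H_s/α)·(H_v/(1−α)² + H_s/α²) + D·exp(−H_s/α)·H_s/α². Then G'(α) tends to −∞ as α tends to 0 from the right (Tendsto G' (nhdsWithin 0 (Set.Ioi 0)) atBot); in particular, G'(α) < 0 for all α in some right-neighborhood of 0. -/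
open Filter

/-- Proof of Lemma 3: for `H_s < 0`, `H_v < 0`, `D > 0` and `C + D ≥ 0`, the derivative
`G'(α)` of the power-allocation objective tends to `−∞` as `α → 0⁺`; in particular it
is negative on a right-neighborhood of `0`. -/
theorem power_objective_deriv_tendsto_atBot
    (Hs Hv A B C D : ℝ) (hHs : Hs < 0) (hHv : Hv < 0) (hD : 0 < D) (hCD : 0 ≤ C + D) :
    Tendsto (fun α : ℝ =>
        A * Real.exp (Hv / (1 - α)) * (Hv / (1 - α) ^ 2)
          + B * Real.exp (2 * Hv / (1 - α)) * (2 * Hv / (1 - α) ^ 2)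
          + C * Real.exp (Hv / (1 - α) - Hs / α) * (Hv / (1 - α) ^ 2 + Hs / α ^ 2)
          + D * Real.exp (-Hs / α) * (Hs / α ^ 2))
        (nhdsWithin 0 (Set.Ioi 0)) atBot ∧
      ∀ᶠ α in nhdsWithin (0 : ℝ) (Set.Ioi 0),
        A * Real.exp (Hv / (1 - α)) * (Hv / (1 - α) ^ 2)
          + B * Real.exp (2 * Hv / (1 - α)) * (2 * Hv / (1 - α) ^ 2)
          + C * Real.exp (Hv / (1 - α) - Hs / α) * (Hv / (1 - α) ^ 2 + Hs / α ^ 2)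
          + D * Real.exp (-Hs / α) * (Hs / α ^ 2) < 0 := by
  have h1 : Tendsto (fun α : ℝ => 1 - α) (nhdsWithin 0 (Set.Ioi 0)) (nhds 1) := by
    have : Tendsto (fun α : ℝ => 1 - α) (nhds (0:ℝ)) (nhds (1 - 0)) :=
      tendsto_const_nhds.sub tendsto_id
    simpa using this.mono_left nhdsWithin_le_nhds
  have hα0 : Tendsto (fun α : ℝ => α) (nhdsWithin 0 (Set.Ioi 0)) (nhds 0) :=
    tendsto_id.mono_left nhdsWithin_le_nhds
  have hsq : Tendsto (fun α : ℝ => (1 - α) ^ 2) (nhdsWithin 0 (Set.Ioi 0)) (nhds 1) := by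
    simpa using h1.pow 2
  have hv1 : Tendsto (fun α : ℝ => Hv / (1 - α)) (nhdsWithin 0 (Set.Ioi 0)) (nhds Hv) := by
    simpa [Pi.div_def] using (tendsto_const_nhds (x := Hv)).div h1 one_ne_zero
  have hv2 : Tendsto (fun α : ℝ => 2 * Hv / (1 - α)) (nhdsWithin 0 (Set.Ioi 0)) (nhds (2 * Hv)) := by
    simpa [Pi.div_def] using (tendsto_const_nhds (x := 2 * Hv)).div h1 one_ne_zero
  have hvq : Tendsto (fun α : ℝ => Hv / (1 - α) ^ 2) (nhdsWithin 0 (Set.Ioi 0)) (nhds Hv) := by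
    simpa [Pi.div_def] using (tendsto_const_nhds (x := Hv)).div hsq one_ne_zero
  have hvq2 : Tendsto (fun α : ℝ => 2 * Hv / (1 - α) ^ 2) (nhdsWithin 0 (Set.Ioi 0))
      (nhds (2 * Hv)) := by
    simpa [Pi.div_def] using (tendsto_const_nhds (x := 2 * Hv)).div hsq one_ne_zero
  -- first two terms tend to finite limits
  have hT1 : Tendsto (fun α : ℝ => A * Real.exp (Hv / (1 - α)) * (Hv / (1 - α) ^ 2))
      (nhdsWithin 0 (Set.Ioi 0)) (nhds (A * Real.exp Hv * Hv)) :=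
    ((tendsto_const_nhds.mul ((Real.continuous_exp.tendsto Hv).comp hv1)).mul hvq)
  have hT2 : Tendsto (fun α : ℝ => B * Real.exp (2 * Hv / (1 - α)) * (2 * Hv / (1 - α) ^ 2))
      (nhdsWithin 0 (Set.Ioi 0)) (nhds (B * Real.exp (2 * Hv) * (2 * Hv))) :=
    ((tendsto_const_nhds.mul ((Real.continuous_exp.tendsto (2 * Hv)).comp hv2)).mul hvq2)
  -- the blow-up factor
  have hE : Tendsto (fun α : ℝ => Real.exp (-Hs / α) / α ^ 2)
      (nhdsWithin 0 (Set.Ioi 0)) atTop := by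
    have hinv : Tendsto (fun α : ℝ => α⁻¹) (nhdsWithin 0 (Set.Ioi 0)) atTop :=
      tendsto_inv_nhdsGT_zero
    have hcomp : Tendsto (fun t : ℝ => Real.exp (-Hs * t) * t ^ 2) atTop atTop := by
      refine Tendsto.atTop_mul_atTop₀ ?_ ?_
      · exact Real.tendsto_exp_atTop.comp (tendsto_id.const_mul_atTop (by linarith))
      · exact tendsto_pow_atTop two_ne_zero
    have := hcomp.comp hinv
    refine this.congr fun α => ?_
    simp [Function.comp, div_eq_mul_inv, inv_pow, mul_comm]
  -- the bracket
  have hg : Tendsto (fun α : ℝ =>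
        C * Real.exp (Hv / (1 - α)) * (Hv * α ^ 2 / (1 - α) ^ 2 + Hs) + D * Hs)
      (nhdsWithin 0 (Set.Ioi 0)) (nhds (C * Real.exp Hv * (Hv * 0 ^ 2 / 1 + Hs) + D * Hs)) := by
    refine Tendsto.add ?_ tendsto_const_nhds
    refine (tendsto_const_nhds.mul ((Real.continuous_exp.tendsto Hv).comp hv1)).mul ?_
    exact ((tendsto_const_nhds.mul (hα0.pow 2)).div hsq one_ne_zero).add tendsto_const_nhds
  have hgneg : C * Real.exp Hv * (Hv * 0 ^ 2 / 1 + Hs) + D * Hs < 0 := by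
    have h1 : Real.exp Hv < 1 := Real.exp_lt_one_iff.mpr hHv
    have h2 : (0:ℝ) < Real.exp Hv := Real.exp_pos Hv
    have key : 0 < C * Real.exp Hv + D := by nlinarith
    have : Hs * (C * Real.exp Hv + D) < 0 := mul_neg_of_neg_of_pos hHs key
    nlinarith
  have hMain : Tendsto (fun α : ℝ => Real.exp (-Hs / α) / α ^ 2 *
        (C * Real.exp (Hv / (1 - α)) * (Hv * α ^ 2 / (1 - α) ^ 2 + Hs) + D * Hs))
      (nhdsWithin 0 (Set.Ioi 0)) atBot :=
    hE.atTop_mul_neg hgneg hg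
  have hsum : Tendsto (fun α : ℝ =>
        A * Real.exp (Hv / (1 - α)) * (Hv / (1 - α) ^ 2)
          + B * Real.exp (2 * Hv / (1 - α)) * (2 * Hv / (1 - α) ^ 2)
          + Real.exp (-Hs / α) / α ^ 2 *
            (C * Real.exp (Hv / (1 - α)) * (Hv * α ^ 2 / (1 - α) ^ 2 + Hs) + D * Hs))
      (nhdsWithin 0 (Set.Ioi 0)) atBot :=
    ((hT1.add hT2).add_atBot hMain).congr (fun α => by ring)
  -- eventual equality on (0,1)
  have hev : ∀ᶠ α in nhdsWithin (0:ℝ) (Set.Ioi 0), α ∈ Set.Ioo (0:ℝ) 1 :=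
    Ioo_mem_nhdsGT_of_mem (Set.mem_Ico.mpr ⟨le_refl 0, one_pos⟩)
  have heq : ∀ᶠ α in nhdsWithin (0:ℝ) (Set.Ioi 0),
      A * Real.exp (Hv / (1 - α)) * (Hv / (1 - α) ^ 2)
          + B * Real.exp (2 * Hv / (1 - α)) * (2 * Hv / (1 - α) ^ 2)
          + Real.exp (-Hs / α) / α ^ 2 *
            (C * Real.exp (Hv / (1 - α)) * (Hv * α ^ 2 / (1 - α) ^ 2 + Hs) + D * Hs)
      = A * Real.exp (Hv / (1 - α)) * (Hv / (1 - α) ^ 2)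
          + B * Real.exp (2 * Hv / (1 - α)) * (2 * Hv / (1 - α) ^ 2)
          + C * Real.exp (Hv / (1 - α) - Hs / α) * (Hv / (1 - α) ^ 2 + Hs / α ^ 2)
          + D * Real.exp (-Hs / α) * (Hs / α ^ 2) := by
    filter_upwards [hev] with α hα
    have hαne : α ≠ 0 := ne_of_gt hα.1
    have h1ne : (1 : ℝ) - α ≠ 0 := by
      have := hα.2; intro h; linarith
    have he : Real.exp (Hv / (1 - α) - Hs / α)
        = Real.exp (Hv / (1 - α)) * Real.exp (-Hs / α) := by
      rw [← Real.exp_add]; congr 1; ring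
    rw [he]
    field_simp
    ring
  have hmain : Tendsto (fun α : ℝ =>
        A * Real.exp (Hv / (1 - α)) * (Hv / (1 - α) ^ 2)
          + B * Real.exp (2 * Hv / (1 - α)) * (2 * Hv / (1 - α) ^ 2)
          + C * Real.exp (Hv / (1 - α) - Hs / α) * (Hv / (1 - α) ^ 2 + Hs / α ^ 2)
          + D * Real.exp (-Hs / α) * (Hs / α ^ 2))
      (nhdsWithin 0 (Set.Ioi 0)) atBot :=
    hsum.congr' heq
  exact ⟨hmain, hmain.eventually (eventually_lt_atBot 0)⟩
end

section
/- For all positive real numbers c and k, the function β ↦ c·β·(1 − 2^{k/β}) is concave on the open interval (0, ∞) (ConcaveOn ℝ (Set.Ioi 0)). -/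
open Real

lemma h_hasDerivAt (k x : ℝ) (hx : x ≠ 0) :
    HasDerivAt (fun β : ℝ => (2 : ℝ) ^ (k / β))
      ((2 : ℝ) ^ (k / x) * Real.log 2 * (k * -(x ^ 2)⁻¹)) x := by
  have hu : HasDerivAt (fun β : ℝ => k / β) (k * -(x ^ 2)⁻¹) x := by
    simpa [div_eq_mul_inv] using (hasDerivAt_inv hx).const_mul k
  exact (Real.hasStrictDerivAt_const_rpow (by norm_num : (0:ℝ) < 2) (k / x)).hasDerivAt.comp x hu

/-- For positive constants `c` and `k`, the function `β ↦ c·β·(1 − 2^{k/β})` is concave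
on `(0, ∞)`; this is the concavity of `H_v` (and `H_s`) exploited by the SCA method. -/
theorem H_concaveOn (c k : ℝ) (hc : 0 < c) (hk : 0 < k) :
    ConcaveOn ℝ (Set.Ioi 0) (fun β : ℝ => c * β * (1 - (2 : ℝ) ^ (k / β))) := by
  set L : ℝ := Real.log 2 with hL
  have hL0 : 0 < L := Real.log_pos (by norm_num)
  have hint : interior (Set.Ioi (0:ℝ)) = Set.Ioi 0 := interior_Ioi
  refine concaveOn_of_hasDerivWithinAt2_nonpos (f' := fun β =>
      c * (1 - (2 : ℝ) ^ (k / β)) + c * (2 : ℝ) ^ (k / β) * L * k / β)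
    (f'' := fun β => -(c * (2 : ℝ) ^ (k / β) * L ^ 2 * k ^ 2 / β ^ 3))
    (convex_Ioi 0) ?_ ?_ ?_ ?_
  · -- continuity
    have hdiv : ContinuousOn (fun β : ℝ => k / β) (Set.Ioi 0) :=
      continuousOn_const.div continuousOn_id fun x hx => ne_of_gt hx
    have hpow : ContinuousOn (fun β : ℝ => (2 : ℝ) ^ (k / β)) (Set.Ioi 0) := by
      simp only [Real.rpow_def_of_pos (by norm_num : (0:ℝ) < 2)]
      exact Real.continuous_exp.comp_continuousOn (continuousOn_const.mul hdiv)
    exact (continuousOn_const.mul continuousOn_id).mul (continuousOn_const.sub hpow)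
  · rw [hint]
    intro x hx
    have hx0 : (x : ℝ) ≠ 0 := ne_of_gt hx
    have h1 : HasDerivAt (fun β : ℝ => c * β * (1 - (2 : ℝ) ^ (k / β)))
        (c * (1 - (2 : ℝ) ^ (k / x)) + c * x * -((2 : ℝ) ^ (k / x) * L * (k * -(x ^ 2)⁻¹))) x := by
      have hmul : HasDerivAt (fun β : ℝ => c * β) c x := by
        simpa using (hasDerivAt_id x).const_mul c
      have hsub : HasDerivAt (fun β : ℝ => 1 - (2 : ℝ) ^ (k / β))
          (-((2 : ℝ) ^ (k / x) * L * (k * -(x ^ 2)⁻¹))) x := by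
        simpa using (h_hasDerivAt k x hx0).const_sub 1
      simpa using hmul.fun_mul hsub
    have : c * (1 - (2 : ℝ) ^ (k / x)) + c * x * -((2 : ℝ) ^ (k / x) * L * (k * -(x ^ 2)⁻¹))
        = c * (1 - (2 : ℝ) ^ (k / x)) + c * (2 : ℝ) ^ (k / x) * L * k / x := by
      field_simp
    exact (this ▸ h1).hasDerivWithinAt
  · rw [hint]
    intro x hx
    have hx0 : (x : ℝ) ≠ 0 := ne_of_gt hx
    have h2 : HasDerivAt (fun β : ℝ =>
        c * (1 - (2 : ℝ) ^ (k / β)) + c * (2 : ℝ) ^ (k / β) * L * k / β)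
        (-(c * (2 : ℝ) ^ (k / x) * L ^ 2 * k ^ 2 / x ^ 3)) x := by
      have hA : HasDerivAt (fun β : ℝ => c * (1 - (2 : ℝ) ^ (k / β)))
          (c * -((2 : ℝ) ^ (k / x) * L * (k * -(x ^ 2)⁻¹))) x := by
        simpa using ((h_hasDerivAt k x hx0).const_sub 1).const_mul c
      have hB : HasDerivAt (fun β : ℝ => c * (2 : ℝ) ^ (k / β) * L * k / β)
          ((c * ((2 : ℝ) ^ (k / x) * L * (k * -(x ^ 2)⁻¹)) * L * k * x
            - c * (2 : ℝ) ^ (k / x) * L * k) / x ^ 2) x := by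
        have hnum : HasDerivAt (fun β : ℝ => c * (2 : ℝ) ^ (k / β) * L * k)
            (c * ((2 : ℝ) ^ (k / x) * L * (k * -(x ^ 2)⁻¹)) * L * k) x := by
          simpa [mul_comm, mul_assoc, mul_left_comm] using
            (((h_hasDerivAt k x hx0).const_mul c).mul_const L).mul_const k
        simpa using hnum.fun_div (hasDerivAt_id x) hx0
      have := hA.fun_add hB
      refine this.congr_deriv ?_
      field_simp
      ring
    exact h2.hasDerivWithinAt
  · rw [hint]
    intro x hx
    have : 0 < c * (2 : ℝ) ^ (k / x) * L ^ 2 * k ^ 2 / x ^ 3 := by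
      apply div_pos
      · exact mul_pos (mul_pos (mul_pos hc (Real.rpow_pos_of_pos (by norm_num) _))
          (pow_pos hL0 2)) (pow_pos hk 2)
      · exact pow_pos hx 3
    linarith
end
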